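/- Let n ≥ 2, v > 0 and Δx > 0, and consider the directed loop graph on nodes indexed by ℤ/nℤ whose only edges are i → i+1 (mod n) with weight v/Δx. Then for every vector u indexed by ℤ/nℤ and every node i, the graph advection operator satisfies (L_adv u)_i = v (u_i − u_{i−1}) / Δx (indices mod n); that is, applying L_adv on the loop graph reproduces the first order upwind scheme for linear advection with periodic boundary conditions. -/

import Mathlib

open Matrix BigOperators

/-- Graph advection operator `L_adv = D_out - A_in` on a graph with nodes indexed by
`ZMod n`, where `A_in = W` and `(D_out) i i = ∑ j, W j i`. -/
def LadvZ (n : ℕ) [NeZero n] (W : Matrix (ZMod n) (ZMod n) ℝ) :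
    Matrix (ZMod n) (ZMod n) ℝ :=
  Matrix.diagonal (fun i => ∑ j, W j i) - W

/-- Weight matrix of the directed loop graph on `ZMod n`: the only edges are
`i → i+1 (mod n)`, each with weight `v/Δx` (`W i j` is the weight of the edge
from `j` to `i`). -/
noncomputable def loopW (n : ℕ) (v Δx : ℝ) : Matrix (ZMod n) (ZMod n) ℝ :=
  fun i j => if i = j + 1 then v / Δx else 0

/-- On the directed loop graph, `L_adv` reproduces the first order upwind scheme with
periodic boundary conditions: `(L_adv u)_i = v (u_i - u_{i-1}) / Δx` for every node. -/
theorem stmt8 (n : ℕ) [NeZero n] (hn : 2 ≤ n) (v Δx : ℝ) (hv : 0 < v) (hΔx : 0 < Δx)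
    (u : ZMod n → ℝ) (i : ZMod n) :
    (LadvZ n (loopW n v Δx) *ᵥ u) i = v * (u i - u (i - 1)) / Δx := by
  have h1 : ∀ k : ZMod n, (∑ j : ZMod n, (if (j : ZMod n) = k + 1 then v / Δx else 0)) = v / Δx := by
    intro k
    simp [Finset.sum_ite_eq' Finset.univ (k+1) (fun _ => v / Δx)]
  simp only [LadvZ, loopW, mulVec, dotProduct, Matrix.sub_apply, diagonal_apply, h1]
  rw [Finset.sum_congr rfl (fun k _ => by
    simp only [show (i = k + 1) ↔ (k = i - 1) from by rw [eq_comm, eq_sub_iff_add_eq, eq_comm]]; ring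
    : ∀ k ∈ Finset.univ,
    ((if i = k then v / Δx else 0) - if i = k + 1 then v / Δx else 0) * u k
      = (if i = k then v / Δx else 0) * u k - (if k = i - 1 then v / Δx else 0) * u k)]
  rw [Finset.sum_sub_distrib]
  simp [Finset.sum_ite_eq Finset.univ i, Finset.sum_ite_eq' Finset.univ (i-1)]
  ring
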